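/- For all x in (0, π/2], it holds that 2/π + (2/π²)(π − 2x) ≥ sin(x)/x ≥ 2/π + ((π − 2)/π²)(π − 2x). -/

import Mathlib

open Real

private lemma concave_nonneg_on {f : ℝ → ℝ} {u v : ℝ} (huv : u ≤ v)
    (h : ConcaveOn ℝ (Set.Icc u v) f) (hu : 0 ≤ f u) (hv : 0 ≤ f v) :
    ∀ x ∈ Set.Icc u v, 0 ≤ f x := by
  intro x hx
  have hz : x ∈ segment ℝ u v := by rwa [segment_eq_Icc huv]
  have := h.ge_on_segment (Set.left_mem_Icc.2 huv) (Set.right_mem_Icc.2 huv) hz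
  exact le_trans (le_min hu hv) this

private lemma lemA : ∀ x ∈ Set.Icc (0:ℝ) (π/2),
    x - 2*(π-2)/π^2 * x^2 ≤ Real.sin x := by
  have hπ3 := Real.pi_gt_three
  have hπ0 : (0:ℝ) < π := Real.pi_pos
  set k : ℝ := 4*(π-2)/π^2 with hk
  have hπsq : (0:ℝ) < π^2 := by positivity
  have hk0 : 0 ≤ k := by
    rw [hk]; apply div_nonneg (by nlinarith) hπsq.le
  have hk1 : k < 1 := by
    rw [hk, div_lt_one hπsq]; nlinarith
  set f : ℝ → ℝ := fun x => Real.sin x - x + (k/2) * x^2 with hfdef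
  set f1 : ℝ → ℝ := fun x => Real.cos x - 1 + k * x with hf1def
  set f2 : ℝ → ℝ := fun x => k - Real.sin x with hf2def
  have hf : ∀ x : ℝ, HasDerivAt f (f1 x) x := by
    intro x
    have h := ((Real.hasDerivAt_sin x).sub (hasDerivAt_id x)).add
      (((hasDerivAt_id x).pow 2).const_mul (k/2))
    refine h.congr_deriv (Eq.symm ?_)
    simp [hf1def]; ring
  have hf1 : ∀ x : ℝ, HasDerivAt f1 (f2 x) x := by
    intro x
    have h := ((Real.hasDerivAt_cos x).sub (hasDerivAt_const x (1:ℝ))).add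
      ((hasDerivAt_id x).const_mul k)
    refine h.congr_deriv (Eq.symm ?_)
    simp [hf2def]; ring
  have hderivf : deriv f = f1 := funext fun x => (hf x).deriv
  have hderivf1 : deriv f1 = f2 := funext fun x => (hf1 x).deriv
  set a : ℝ := Real.arcsin k with ha
  have ha0 : 0 ≤ a := Real.arcsin_nonneg.2 hk0
  have haπ : a ≤ π/2 := Real.arcsin_le_pi_div_two k
  have hsina : Real.sin a = k := Real.sin_arcsin (by linarith) hk1.le
  have sinmono := Real.strictMonoOn_sin.monotoneOn
  -- Part 1 : f nonneg on [0, a]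
  have part1 : ∀ y ∈ Set.Icc 0 a, 0 ≤ f y := by
    have hmono1 : MonotoneOn f1 (Set.Icc 0 a) := by
      apply monotoneOn_of_deriv_nonneg (convex_Icc 0 a)
        (Continuous.continuousOn (by fun_prop))
        (fun y _ => (hf1 y).differentiableAt.differentiableWithinAt)
      intro y hy
      rw [interior_Icc] at hy
      rw [hderivf1]
      have : Real.sin y ≤ Real.sin a := by
        rw [← hsina] at *
        apply sinmono ⟨by linarith [hy.1], by linarith [hy.2]⟩
          ⟨by linarith, by linarith⟩ hy.2.le
      simp [hf2def]; linarith [hsina ▸ this]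
    have hf1nonneg : ∀ y ∈ Set.Icc 0 a, 0 ≤ f1 y := by
      intro y hy
      have h0 : f1 0 = 0 := by simp [hf1def]
      have := hmono1 (Set.left_mem_Icc.2 ha0) hy hy.1
      linarith [h0 ▸ this]
    have hmono : MonotoneOn f (Set.Icc 0 a) := by
      apply monotoneOn_of_deriv_nonneg (convex_Icc 0 a)
        (Continuous.continuousOn (by fun_prop))
        (fun y _ => (hf y).differentiableAt.differentiableWithinAt)
      intro y hy
      rw [interior_Icc] at hy
      rw [hderivf]
      exact hf1nonneg y ⟨hy.1.le, hy.2.le⟩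
    intro y hy
    have h0 : f 0 = 0 := by simp [hfdef]
    have := hmono (Set.left_mem_Icc.2 ha0) hy hy.1
    linarith [h0 ▸ this]
  -- Part 2 : f concave on [a, π/2]
  have hconc : ConcaveOn ℝ (Set.Icc a (π/2)) f := by
    apply concaveOn_of_hasDerivWithinAt2_nonpos (convex_Icc a (π/2))
      (Continuous.continuousOn (by fun_prop))
      (fun y _ => (hf y).hasDerivWithinAt)
      (fun y _ => (hf1 y).hasDerivWithinAt)
    intro y hy
    rw [interior_Icc] at hy
    have : Real.sin a ≤ Real.sin y :=
      sinmono ⟨by linarith, by linarith [hy.2]⟩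
        ⟨by linarith [hy.1], by linarith [hy.2]⟩ hy.1.le
    simp [hf2def]; linarith [hsina ▸ this]
  have hfpi2 : f (π/2) = 0 := by
    simp only [hfdef, Real.sin_pi_div_two, hk]
    field_simp
    ring
  have part2 : ∀ y ∈ Set.Icc a (π/2), 0 ≤ f y := by
    apply concave_nonneg_on haπ hconc
    · exact part1 a (Set.right_mem_Icc.2 ha0)
    · rw [hfpi2]
  intro x hx
  have hfx : 0 ≤ f x := by
    rcases le_or_gt x a with h | h
    · exact part1 x ⟨hx.1, h⟩
    · exact part2 x ⟨h.le, hx.2⟩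
  have heq : (k/2) * x^2 = 2*(π-2)/π^2 * x^2 := by rw [hk]; ring
  simp only [hfdef] at hfx
  linarith [heq ▸ hfx]

private lemma lemB : ∀ x ∈ Set.Icc (0:ℝ) (π/2),
    Real.sin x ≤ 4/π^2 * (x*(π - x)) := by
  have hπ3 := Real.pi_gt_three
  have hπ0 : (0:ℝ) < π := Real.pi_pos
  set m : ℝ := 8/π^2 with hm
  have hπsq : (0:ℝ) < π^2 := by positivity
  have hm0 : 0 ≤ m := by positivity
  have hm1 : m < 1 := by
    rw [hm, div_lt_one hπsq]; nlinarith
  set g : ℝ → ℝ := fun x => 4/π^2 * (x*(π - x)) - Real.sin x with hgdef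
  set g1 : ℝ → ℝ := fun x => 4/π^2 * (π - 2*x) - Real.cos x with hg1def
  set g2 : ℝ → ℝ := fun x => Real.sin x - 8/π^2 with hg2def
  have hg : ∀ x : ℝ, HasDerivAt g (g1 x) x := by
    intro x
    have h := (((hasDerivAt_id x).mul ((hasDerivAt_const x π).sub (hasDerivAt_id x))).const_mul
      (4/π^2)).sub (Real.hasDerivAt_sin x)
    refine h.congr_deriv (Eq.symm ?_)
    simp only [hg1def, id, Pi.sub_apply]; ring
  have hg1 : ∀ x : ℝ, HasDerivAt g1 (g2 x) x := by
    intro x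
    have h := (((hasDerivAt_const x π).sub ((hasDerivAt_id x).const_mul 2)).const_mul
      (4/π^2)).sub (Real.hasDerivAt_cos x)
    refine h.congr_deriv (Eq.symm ?_)
    simp only [hg2def, id]; field_simp; ring
  have hderivg : deriv g = g1 := funext fun x => (hg x).deriv
  have hderivg1 : deriv g1 = g2 := funext fun x => (hg1 x).deriv
  set b : ℝ := Real.arcsin m with hb
  have hb0 : 0 ≤ b := Real.arcsin_nonneg.2 hm0
  have hbπ : b ≤ π/2 := Real.arcsin_le_pi_div_two m
  have hsinb : Real.sin b = m := Real.sin_arcsin (by linarith) hm1.le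
  have sinmono := Real.strictMonoOn_sin.monotoneOn
  -- Part 2 : g nonneg on [b, π/2]
  have part2 : ∀ y ∈ Set.Icc b (π/2), 0 ≤ g y := by
    have hmono1 : MonotoneOn g1 (Set.Icc b (π/2)) := by
      apply monotoneOn_of_deriv_nonneg (convex_Icc b (π/2))
        (Continuous.continuousOn (by fun_prop))
        (fun y _ => (hg1 y).differentiableAt.differentiableWithinAt)
      intro y hy
      rw [interior_Icc] at hy
      rw [hderivg1]
      have : Real.sin b ≤ Real.sin y :=
        sinmono ⟨by linarith, by linarith⟩
          ⟨by linarith [hy.1], by linarith [hy.2]⟩ hy.1.le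
      simp [hg2def]; linarith [hsinb ▸ this]
    have hg1pi2 : g1 (π/2) = 0 := by
      simp only [hg1def]
      rw [Real.cos_pi_div_two]
      ring
    have hg1nonpos : ∀ y ∈ Set.Icc b (π/2), g1 y ≤ 0 := by
      intro y hy
      have := hmono1 hy (Set.right_mem_Icc.2 hbπ) hy.2
      linarith [hg1pi2 ▸ this]
    have hanti : AntitoneOn g (Set.Icc b (π/2)) := by
      apply antitoneOn_of_deriv_nonpos (convex_Icc b (π/2))
        (Continuous.continuousOn (by fun_prop))
        (fun y _ => (hg y).differentiableAt.differentiableWithinAt)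
      intro y hy
      rw [interior_Icc] at hy
      rw [hderivg]
      exact hg1nonpos y ⟨hy.1.le, hy.2.le⟩
    intro y hy
    have hgpi2 : g (π/2) = 0 := by
      simp only [hgdef, Real.sin_pi_div_two]
      field_simp
      ring
    have := hanti hy (Set.right_mem_Icc.2 hbπ) hy.2
    linarith [hgpi2 ▸ this]
  -- Part 1 : g concave on [0, b]
  have hconc : ConcaveOn ℝ (Set.Icc 0 b) g := by
    apply concaveOn_of_hasDerivWithinAt2_nonpos (convex_Icc 0 b)
      (Continuous.continuousOn (by fun_prop))
      (fun y _ => (hg y).hasDerivWithinAt)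
      (fun y _ => (hg1 y).hasDerivWithinAt)
    intro y hy
    rw [interior_Icc] at hy
    have : Real.sin y ≤ Real.sin b :=
      sinmono ⟨by linarith [hy.1], by linarith [hy.2]⟩
        ⟨by linarith, by linarith⟩ hy.2.le
    simp [hg2def]; linarith [hsinb ▸ this]
  have part1 : ∀ y ∈ Set.Icc 0 b, 0 ≤ g y := by
    apply concave_nonneg_on hb0 hconc
    · simp [hgdef]
    · exact part2 b (Set.left_mem_Icc.2 hbπ)
  intro x hx
  have hgx : 0 ≤ g x := by
    rcases le_or_gt x b with h | h
    · exact part1 x ⟨hx.1, h⟩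
    · exact part2 x ⟨h.le, hx.2⟩
  simp only [hgdef] at hgx
  linarith

theorem qi_guo (x : ℝ) (hx : x ∈ Set.Ioc 0 (π/2)) :
    2/π + (π - 2)/π^2 * (π - 2*x) ≤ Real.sin x / x ∧
    Real.sin x / x ≤ 2/π + 2/π^2 * (π - 2*x) := by
  have hπ0 : (0:ℝ) < π := Real.pi_pos
  have hπ : π ≠ 0 := ne_of_gt hπ0
  have hx0 : 0 < x := hx.1
  constructor
  · rw [le_div_iff₀ hx0]
    have h := lemA x ⟨hx0.le, hx.2⟩
    have heq : (2/π + (π - 2)/π^2 * (π - 2*x)) * x = x - 2*(π-2)/π^2 * x^2 := by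
      field_simp; ring
    linarith [heq ▸ h]
  · rw [div_le_iff₀ hx0]
    have h := lemB x ⟨hx0.le, hx.2⟩
    have heq : (2/π + 2/π^2 * (π - 2*x)) * x = 4/π^2 * (x*(π - x)) := by
      field_simp; ring
    linarith [heq ▸ h]
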